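/- arXiv:2102.07974 — 2 statements merged into one kernel-verified Lean document; each statement's English description precedes it below -/
import Mathlib

section
/- Consider the symmetric case b = 1/2 and write f_a = f_{a,1/2}. For every a > 0: (i) every x ∈ (0,1) with f_a(f_a(x)) = x satisfies f_a(x) = 1 − x (so every period-2 orbit of f_a in (0,1) has the form {σ, 1−σ}); and (ii) for every x ∈ (0,1), the sequence (f_a^{2n}(x))_{n∈ℕ} converges to some p ∈ (0,1) with f_a(f_a(p)) = p, i.e., every trajectory converges to a fixed point or to a periodic orbit of period 2 of f_a. -/
open Filter

private lemma stmt17_up (S : ℝ → ℝ) (hD : ∀ u v : ℝ, u < v → S u + u < S v + v)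
    (z : ℕ → ℝ) (hz : ∀ n, z (n+1) = S (z n)) :
    ∀ n m : ℕ, n < m → z n < z (n+1) → z n < z m := by
  intro n m
  induction m using Nat.strong_induction_on with
  | _ m IH =>
    intro hnm hup
    rcases eq_or_lt_of_le (Nat.succ_le_of_lt hnm) with he | hlt
    · exact he ▸ hup
    · obtain ⟨m', rfl⟩ : ∃ m', m = m' + 1 := ⟨m - 1, by omega⟩
      have hnm' : n < m' := by omega
      by_contra hcon
      push_neg at hcon
      have inner : ∀ j, n ≤ j → (j ≤ m' → z j < z m') := by
        intro j hj
        induction j, hj using Nat.le_induction with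
        | base => intro _; exact IH m' (by omega) hnm' hup
        | succ j hj IHj =>
          intro hjm
          have h1 : z j < z m' := IHj (by omega)
          have h2 : z n ≤ z j := by
            rcases eq_or_lt_of_le hj with he2 | hl2
            · exact le_of_eq (congrArg z he2)
            · exact le_of_lt (IH j (by omega) hl2 hup)
          have h3 := hD (z j) (z m') h1
          rw [← hz j, ← hz m'] at h3
          linarith
      exact absurd (inner m' (le_of_lt hnm') le_rfl) (lt_irrefl _)

private lemma stmt17_down (S : ℝ → ℝ) (hD : ∀ u v : ℝ, u < v → S u + u < S v + v)
    (z : ℕ → ℝ) (hz : ∀ n, z (n+1) = S (z n)) :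
    ∀ n m : ℕ, n < m → z (n+1) < z n → z m < z n := by
  intro n m hnm hdn
  have key := stmt17_up (fun y => -S (-y))
    (fun u v huv => by
      have h := hD (-v) (-u) (by linarith)
      linarith)
    (fun k => -(z k))
    (fun k => by rw [hz k, neg_neg])
    n m hnm (by linarith)
  linarith

private lemma stmt17_conv (S : ℝ → ℝ) (hS : Continuous S)
    (hD : ∀ u v : ℝ, u < v → S u + u < S v + v)
    (z : ℕ → ℝ) (hz : ∀ n, z (n+1) = S (z n))
    (B : ℝ) (hB : ∀ n, |z n| ≤ B) :
    ∃ L : ℝ, Filter.Tendsto z Filter.atTop (nhds L) := by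
  by_cases hcst : ∃ n, z (n + 1) = z n
  · obtain ⟨n, hn⟩ := hcst
    refine ⟨z n, ?_⟩
    have hconst : ∀ m, n ≤ m → z m = z n := by
      intro m hm
      induction m, hm using Nat.le_induction with
      | base => rfl
      | succ m hm IH => rw [hz m, IH, ← hz n, hn]
    refine Filter.Tendsto.congr' ?_ tendsto_const_nhds
    filter_upwards [Filter.eventually_ge_atTop n] with m hm using (hconst m hm).symm
  · push_neg at hcst
    by_cases hLoEv : ∃ N, ∀ n, N ≤ n → z n < z (n + 1)
    · obtain ⟨N, hN⟩ := hLoEv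
      have hmono : Monotone fun k => z (N + k) :=
        monotone_nat_of_le_succ fun k => le_of_lt (hN (N + k) (by omega))
      have hbdd : BddAbove (Set.range fun k => z (N + k)) :=
        ⟨B, by rintro x ⟨k, rfl⟩; exact (abs_le.mp (hB _)).2⟩
      refine ⟨⨆ k, z (N + k), ?_⟩
      have hT := tendsto_atTop_ciSup hmono hbdd
      have hT' : Tendsto (fun k => z (k + N)) atTop (nhds (⨆ k, z (N + k))) := by
        simpa [Nat.add_comm] using hT
      exact (Filter.tendsto_add_atTop_iff_nat N).mp hT'
    · by_cases hHiEv : ∃ N, ∀ n, N ≤ n → z (n + 1) < z n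
      · obtain ⟨N, hN⟩ := hHiEv
        have hanti : Antitone fun k => z (N + k) :=
          antitone_nat_of_succ_le fun k => le_of_lt (hN (N + k) (by omega))
        have hbdd : BddBelow (Set.range fun k => z (N + k)) :=
          ⟨-B, by rintro x ⟨k, rfl⟩; exact (abs_le.mp (hB _)).1⟩
        refine ⟨⨅ k, z (N + k), ?_⟩
        have hT := tendsto_atTop_ciInf hanti hbdd
        have hT' : Tendsto (fun k => z (k + N)) atTop (nhds (⨅ k, z (N + k))) := by
          simpa [Nat.add_comm] using hT
        exact (Filter.tendsto_add_atTop_iff_nat N).mp hT'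
      · push_neg at hLoEv hHiEv
        have freqHi : ∀ N, ∃ n, N ≤ n ∧ z (n+1) < z n := by
          intro N
          obtain ⟨n, hn1, hn2⟩ := hLoEv N
          exact ⟨n, hn1, lt_of_le_of_ne hn2 (hcst n)⟩
        have freqLo : ∀ N, ∃ n, N ≤ n ∧ z n < z (n+1) := by
          intro N
          obtain ⟨n, hn1, hn2⟩ := hHiEv N
          exact ⟨n, hn1, lt_of_le_of_ne hn2 (hcst n).symm⟩
        set SLo : Set ℝ := {x : ℝ | ∃ n, z n < z (n+1) ∧ z n = x} with hSLodef
        set SHi : Set ℝ := {x : ℝ | ∃ n, z (n+1) < z n ∧ z n = x} with hSHidef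
        have hSLone : SLo.Nonempty := by
          obtain ⟨n, _, h⟩ := freqLo 0; exact ⟨z n, n, h, rfl⟩
        have hSHine : SHi.Nonempty := by
          obtain ⟨n, _, h⟩ := freqHi 0; exact ⟨z n, n, h, rfl⟩
        have hSLobdd : BddAbove SLo := by
          refine ⟨B, ?_⟩; rintro x ⟨n, _, rfl⟩; exact (abs_le.mp (hB n)).2
        have hSHibdd : BddBelow SHi := by
          refine ⟨-B, ?_⟩; rintro x ⟨n, _, rfl⟩; exact (abs_le.mp (hB n)).1
        set l := sSup SLo with hldef
        set h := sInf SHi with hhdef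
        have hubLo : ∀ n, z n < z (n+1) → z n ≤ l := fun n hn => le_csSup hSLobdd ⟨n, hn, rfl⟩
        have hlbHi : ∀ n, z (n+1) < z n → h ≤ z n := fun n hn => csInf_le hSHibdd ⟨n, hn, rfl⟩
        have key1 : ∀ ε : ℝ, 0 < ε → ∃ N, ∀ m, N < m → l - ε < z m := by
          intro ε hε
          obtain ⟨x, hxm, hx⟩ := exists_lt_of_lt_csSup hSLone (by linarith : l - ε < l)
          obtain ⟨n, hLo, rfl⟩ := hxm
          exact ⟨n, fun m hm => lt_of_lt_of_le hx (le_of_lt (stmt17_up S hD z hz n m hm hLo))⟩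
        have key2 : ∀ ε : ℝ, 0 < ε → ∃ N, ∀ m, N < m → z m < h + ε := by
          intro ε hε
          obtain ⟨x, hxm, hx⟩ := exists_lt_of_csInf_lt hSHine (by linarith : h < h + ε)
          obtain ⟨n, hHi, rfl⟩ := hxm
          exact ⟨n, fun m hm => lt_of_le_of_lt (le_of_lt (stmt17_down S hD z hz n m hm hHi)) hx⟩
        have trans1 : ∀ N, ∃ n, N ≤ n ∧ z n < z (n+1) ∧ z (n+1+1) < z (n+1) := by
          intro N
          by_contra hcon
          push_neg at hcon
          obtain ⟨n0, hn0, hn0Lo⟩ := freqLo N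
          have hall : ∀ m, n0 ≤ m → z m < z (m+1) := by
            intro m hm
            induction m, hm using Nat.le_induction with
            | base => exact hn0Lo
            | succ m hm IH =>
              exact lt_of_le_of_ne (hcon m (le_trans hn0 hm) IH) (hcst (m+1)).symm
          obtain ⟨n1, hn11, hn12⟩ := freqHi n0
          exact absurd (hall n1 hn11) (not_lt.mpr (le_of_lt hn12))
        have trans2 : ∀ N, ∃ n, N ≤ n ∧ z (n+1) < z n ∧ z (n+1) < z (n+1+1) := by
          intro N
          by_contra hcon
          push_neg at hcon
          obtain ⟨n0, hn0, hn0Hi⟩ := freqHi N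
          have hall : ∀ m, n0 ≤ m → z (m+1) < z m := by
            intro m hm
            induction m, hm using Nat.le_induction with
            | base => exact hn0Hi
            | succ m hm IH =>
              exact lt_of_le_of_ne (hcon m (le_trans hn0 hm) IH) (hcst (m+1))
          obtain ⟨n1, hn11, hn12⟩ := freqLo n0
          exact absurd (hall n1 hn11) (not_lt.mpr (le_of_lt hn12))
        have hlow : Filter.Tendsto (fun k : ℕ => l - 1/((k:ℝ)+1)) atTop (nhds l) := by
          have h0 : Filter.Tendsto (fun k : ℕ => 1/((k:ℝ)+1)) atTop (nhds 0) :=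
            tendsto_one_div_add_atTop_nhds_zero_nat
          simpa using tendsto_const_nhds.sub h0
        have hhigh : Filter.Tendsto (fun k : ℕ => h + 1/((k:ℝ)+1)) atTop (nhds h) := by
          have h0 : Filter.Tendsto (fun k : ℕ => 1/((k:ℝ)+1)) atTop (nhds 0) :=
            tendsto_one_div_add_atTop_nhds_zero_nat
          simpa using tendsto_const_nhds.add h0
        have hSl : S l = h := by
          have hex : ∀ k : ℕ, ∃ n : ℕ, (l - 1/((k:ℝ)+1) < z n) ∧ z n ≤ l ∧ (h ≤ z (n+1)) ∧
              z (n+1) < h + 1/((k:ℝ)+1) := by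
            intro k
            have hk : (0:ℝ) < 1/((k:ℝ)+1) := by positivity
            obtain ⟨N1, hN1⟩ := key1 _ hk
            obtain ⟨N2, hN2⟩ := key2 _ hk
            obtain ⟨n, hn, hLo, hHi⟩ := trans1 (N1 + N2 + 1)
            exact ⟨n, hN1 n (by omega), hubLo n hLo, hlbHi (n+1) hHi, hN2 (n+1) (by omega)⟩
          choose u hu1 hu2 hu3 hu4 using hex
          have hzu : Filter.Tendsto (fun k => z (u k)) atTop (nhds l) :=
            tendsto_of_tendsto_of_tendsto_of_le_of_le hlow tendsto_const_nhds
              (fun k => le_of_lt (hu1 k)) hu2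
          have hzu1 : Filter.Tendsto (fun k => z (u k + 1)) atTop (nhds h) :=
            tendsto_of_tendsto_of_tendsto_of_le_of_le tendsto_const_nhds hhigh
              hu3 (fun k => le_of_lt (hu4 k))
          have hcomp : Filter.Tendsto (fun k => S (z (u k))) atTop (nhds (S l)) :=
            (hS.tendsto l).comp hzu
          have heq : (fun k => S (z (u k))) = fun k => z (u k + 1) :=
            funext fun k => (hz (u k)).symm
          rw [heq] at hcomp
          exact tendsto_nhds_unique hcomp hzu1
        have hSh : S h = l := by
          have hex : ∀ k : ℕ, ∃ n : ℕ, (h ≤ z n) ∧ z n < h + 1/((k:ℝ)+1) ∧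
              (l - 1/((k:ℝ)+1) < z (n+1)) ∧ z (n+1) ≤ l := by
            intro k
            have hk : (0:ℝ) < 1/((k:ℝ)+1) := by positivity
            obtain ⟨N1, hN1⟩ := key1 _ hk
            obtain ⟨N2, hN2⟩ := key2 _ hk
            obtain ⟨n, hn, hHi, hLo⟩ := trans2 (N1 + N2 + 1)
            exact ⟨n, hlbHi n hHi, hN2 n (by omega), hN1 (n+1) (by omega), hubLo (n+1) hLo⟩
          choose u hu1 hu2 hu3 hu4 using hex
          have hzu : Filter.Tendsto (fun k => z (u k)) atTop (nhds h) :=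
            tendsto_of_tendsto_of_tendsto_of_le_of_le tendsto_const_nhds hhigh
              hu1 (fun k => le_of_lt (hu2 k))
          have hzu1 : Filter.Tendsto (fun k => z (u k + 1)) atTop (nhds l) :=
            tendsto_of_tendsto_of_tendsto_of_le_of_le hlow tendsto_const_nhds
              (fun k => le_of_lt (hu3 k)) hu4
          have hcomp : Filter.Tendsto (fun k => S (z (u k))) atTop (nhds (S h)) :=
            (hS.tendsto h).comp hzu
          have heq : (fun k => S (z (u k))) = fun k => z (u k + 1) :=
            funext fun k => (hz (u k)).symm
          rw [heq] at hcomp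
          exact tendsto_nhds_unique hcomp hzu1
        have hlh : l = h := by
          by_contra hne
          rcases lt_or_gt_of_ne hne with hlt | hgt
          · have := hD l h hlt; rw [hSl, hSh] at this; linarith
          · have := hD h l hgt; rw [hSh, hSl] at this; linarith
        refine ⟨l, ?_⟩
        rw [Metric.tendsto_atTop]
        intro ε hε
        obtain ⟨N1, hN1⟩ := key1 (ε/2) (by linarith)
        obtain ⟨N2, hN2⟩ := key2 (ε/2) (by linarith)
        refine ⟨N1 + N2 + 1, fun m hm => ?_⟩
        have h1 := hN1 m (by omega)
        have h2 := hN2 m (by omega)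
        have h2' : z m < l + ε/2 := by rw [hlh]; exact h2
        rw [Real.dist_eq, abs_lt]
        constructor <;> linarith

theorem stmt17
    (Ψ Ψinv : ℝ → ℝ)
    (hΨcont : ContinuousOn Ψ (Set.Ioo 0 1))
    (hΨanti : StrictAntiOn Ψ (Set.Ioo 0 1))
    (hΨbij : Set.BijOn Ψ (Set.Ioo 0 1) Set.univ)
    (hΨsym : ∀ x ∈ Set.Ioo (0:ℝ) 1, Ψ (1 - x) = -Ψ x)
    (hinv1 : ∀ x ∈ Set.Ioo (0:ℝ) 1, Ψinv (Ψ x) = x)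
    (hinv2 : ∀ y : ℝ, Ψinv y ∈ Set.Ioo (0:ℝ) 1 ∧ Ψ (Ψinv y) = y)
    (a : ℝ) (ha : 0 < a)
    (f : ℝ → ℝ) (hf0 : f 0 = 0) (hf1 : f 1 = 1)
    (hf : ∀ x ∈ Set.Ioo (0:ℝ) 1, f x = Ψinv (Ψ x + a * (x - 1/2))) :
    (∀ x ∈ Set.Ioo (0:ℝ) 1, f (f x) = x → f x = 1 - x) ∧
    (∀ x ∈ Set.Ioo (0:ℝ) 1, ∃ p ∈ Set.Ioo (0:ℝ) 1,
      f (f p) = p ∧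
      Filter.Tendsto (fun n : ℕ => f^[2 * n] x) Filter.atTop (nhds p)) := by
  have hhalf : (1/2 : ℝ) ∈ Set.Ioo (0:ℝ) 1 := by rw [Set.mem_Ioo]; norm_num
  have hΨhalf : Ψ (1/2 : ℝ) = 0 := by
    have hsym := hΨsym (1/2) hhalf
    norm_num at hsym
    linarith
  have hstep : ∀ t ∈ Set.Ioo (0:ℝ) 1, f t ∈ Set.Ioo (0:ℝ) 1 ∧ Ψ (f t) = Ψ t + a * (t - 1/2) := by
    intro t ht
    rw [hf t ht]
    exact ⟨(hinv2 _).1, (hinv2 _).2⟩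
  constructor
  · intro x hx hper
    have h1 := hstep x hx
    have h2 := hstep (f x) h1.1
    rw [hper] at h2
    have heq : Ψ x = (Ψ x + a * (x - 1/2)) + a * (f x - 1/2) := by
      rw [← h1.2]; exact h2.2
    have hz : a * ((x - 1/2) + (f x - 1/2)) = 0 := by linarith
    rcases mul_eq_zero.mp hz with h0 | h0
    · exact absurd h0 (ne_of_gt ha)
    · linarith
  · intro x hx
    -- preliminaries about Ψinv
    have hinvanti : StrictAnti Ψinv := by
      intro y1 y2 h12
      rcases lt_trichotomy (Ψinv y2) (Ψinv y1) with hlt | heq | hgt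
      · exact hlt
      · exfalso
        have e1 := (hinv2 y1).2
        have e2 := (hinv2 y2).2
        rw [heq] at e2
        rw [e1] at e2
        linarith
      · exfalso
        have := hΨanti (hinv2 y1).1 (hinv2 y2).1 hgt
        rw [(hinv2 y1).2, (hinv2 y2).2] at this
        linarith
    have hrange : (Set.range fun y => Ψinv (-y)) = Set.Ioo (0:ℝ) 1 := by
      ext t
      constructor
      · rintro ⟨y, rfl⟩; exact (hinv2 _).1
      · intro ht; exact ⟨-Ψ t, by simp only [neg_neg]; exact hinv1 t ht⟩
    have hcontaux : Continuous fun y => Ψinv (-y) := by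
      rw [continuous_iff_continuousAt]
      intro y0
      apply StrictMonoOn.continuousAt_of_image_mem_nhds (s := Set.univ)
      · intro u _ v _ huv
        exact hinvanti (neg_lt_neg huv)
      · exact Filter.univ_mem
      · rw [Set.image_univ, hrange]
        exact isOpen_Ioo.mem_nhds (hinv2 _).1
    have hinvcont : Continuous Ψinv := by
      have heqf : Ψinv = (fun y => Ψinv (-y)) ∘ fun y : ℝ => -y := funext fun y => by simp
      rw [heqf]
      exact hcontaux.comp continuous_neg
    have hodd : ∀ y : ℝ, Ψinv (-y) = 1 - Ψinv y := by
      intro y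
      have hxm := (hinv2 y).1
      have hx2 : 1 - Ψinv y ∈ Set.Ioo (0:ℝ) 1 :=
        ⟨by linarith [hxm.2], by linarith [hxm.1]⟩
      have hval : Ψ (1 - Ψinv y) = -y := by rw [hΨsym _ hxm, (hinv2 y).2]
      rw [← hval, hinv1 _ hx2]
    have hΨinv0 : Ψinv 0 = 1/2 := by rw [← hΨhalf, hinv1 _ hhalf]
    set S : ℝ → ℝ := fun y => a * (1/2 - Ψinv y) - y with hSdef
    have hD : ∀ u v : ℝ, u < v → S u + u < S v + v := by
      intro u v huv
      simp only [hSdef]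
      have hmono : Ψinv v < Ψinv u := hinvanti huv
      nlinarith [mul_pos ha (sub_pos.mpr hmono)]
    have hScont : Continuous S := by
      rw [hSdef]
      exact (continuous_const.mul (continuous_const.sub hinvcont)).sub continuous_id
    have hxseq : ∀ n : ℕ, f^[n] x ∈ Set.Ioo (0:ℝ) 1 := by
      intro n
      induction n with
      | zero => simpa using hx
      | succ n IH => rw [Function.iterate_succ_apply']; exact (hstep _ IH).1
    set z : ℕ → ℝ := fun n => (-1:ℝ)^n * Ψ (f^[n] x) with hzdef
    have hzrec : ∀ n, z (n+1) = S (z n) := by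
      intro n
      have hxn := hxseq n
      have hs := hstep _ hxn
      have hit : f^[n+1] x = f (f^[n] x) := Function.iterate_succ_apply' f n x
      rcases Nat.even_or_odd n with he | ho
      · have hp1 : (-1:ℝ)^n = 1 := he.neg_one_pow
        have hp2 : (-1:ℝ)^(n+1) = -1 := by rw [pow_succ, hp1]; ring
        simp only [hzdef, hSdef, hp1, hp2, one_mul]
        rw [hit, hs.2, hinv1 _ hxn]
        ring
      · have hp1 : (-1:ℝ)^n = -1 := ho.neg_one_pow
        have hp2 : (-1:ℝ)^(n+1) = 1 := by rw [pow_succ, hp1]; ring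
        simp only [hzdef, hSdef, hp1, hp2, one_mul]
        rw [hit, hs.2]
        have hio : Ψinv (-1 * Ψ (f^[n] x)) = 1 - f^[n] x := by
          rw [neg_one_mul, hodd, hinv1 _ hxn]
        rw [hio]
        ring
    have hB : ∀ n, |z n| ≤ max (|z 0|) (a/2) := by
      intro n
      induction n with
      | zero => exact le_max_left _ _
      | succ n IH =>
        rw [hzrec n]
        have hm := (hinv2 (z n)).1
        have h1 : 0 < Ψinv (z n) := hm.1
        have h2 : Ψinv (z n) < 1 := hm.2
        have habs : |S (z n)| ≤ max (|z n|) (a/2) := by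
          simp only [hSdef]
          rw [abs_le]
          have hza : z n ≤ |z n| := le_abs_self _
          have hza' : -|z n| ≤ z n := neg_abs_le _
          have hmax1 : |z n| ≤ max (|z n|) (a/2) := le_max_left _ _
          have hmax2 : a/2 ≤ max (|z n|) (a/2) := le_max_right _ _
          constructor
          · rcases le_or_gt 0 (z n) with hz0 | hz0
            · have hle : Ψinv (z n) ≤ 1/2 := by
                rcases eq_or_lt_of_le hz0 with he | hl
                · rw [← he, hΨinv0]
                · rw [← hΨinv0]; exact le_of_lt (hinvanti hl)
              nlinarith
            · have hge : -(a/2) ≤ a * (1/2 - Ψinv (z n)) := by nlinarith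
              nlinarith
          · rcases le_or_gt 0 (z n) with hz0 | hz0
            · have hle : a * (1/2 - Ψinv (z n)) ≤ a/2 := by nlinarith
              nlinarith
            · have hge : 1/2 ≤ Ψinv (z n) := by
                rw [← hΨinv0]; exact le_of_lt (hinvanti hz0)
              nlinarith
        exact le_trans habs (max_le (le_trans IH le_rfl) (le_max_right _ _))
    obtain ⟨L, hL⟩ := stmt17_conv S hScont hD z hzrec _ hB
    have hL1 : Filter.Tendsto (fun n => z (n+1)) Filter.atTop (nhds L) :=
      (Filter.tendsto_add_atTop_iff_nat 1).mpr hL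
    have hL2 : Filter.Tendsto (fun n => S (z n)) Filter.atTop (nhds (S L)) :=
      (hScont.tendsto L).comp hL
    have hL1' : Filter.Tendsto (fun n => S (z n)) Filter.atTop (nhds L) :=
      Filter.Tendsto.congr (fun n => hzrec n) hL1
    have hSL : S L = L := tendsto_nhds_unique hL2 hL1'
    have hdL : a * (1/2 - Ψinv L) = 2 * L := by
      have hh := hSL
      simp only [hSdef] at hh
      linarith
    have hpm := (hinv2 L).1
    refine ⟨Ψinv L, hpm, ?_, ?_⟩
    · have hfp : f (Ψinv L) = Ψinv (-L) := by
        rw [hf _ hpm, (hinv2 L).2]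
        congr 1
        linarith [hdL]
      have hfpm : Ψinv (-L) ∈ Set.Ioo (0:ℝ) 1 := (hinv2 _).1
      rw [hfp, hf _ hfpm, (hinv2 (-L)).2, hodd]
      congr 1
      linarith [hdL]
    · have h2n : Filter.Tendsto (fun n => z (2*n)) Filter.atTop (nhds L) :=
        hL.comp (Filter.tendsto_atTop_mono (fun n => by omega : ∀ n : ℕ, n ≤ 2*n)
          Filter.tendsto_id)
      have heq : ∀ n : ℕ, Ψinv (z (2*n)) = f^[2*n] x := by
        intro n
        have hp1 : (-1:ℝ)^(2*n) = 1 := by rw [pow_mul]; norm_num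
        simp only [hzdef, hp1, one_mul]
        exact hinv1 _ (hxseq (2*n))
      exact Filter.Tendsto.congr heq ((hinvcont.tendsto L).comp h2n)
end

section
/- Consider the symmetric case b = 1/2 and write f_a = f_{a,1/2}. If a > −2Ψ′(1/2), then there exists σ ∈ (0, 1/2) with 2Ψ(σ) = −a(σ − 1/2); equivalently f_a(σ) = 1 − σ, so that {σ, 1 − σ} is a periodic orbit of f_a of period 2. -/
theorem stmt18
    (Ψ Ψinv : ℝ → ℝ)
    (hΨcont : ContinuousOn Ψ (Set.Ioo 0 1))
    (hΨanti : StrictAntiOn Ψ (Set.Ioo 0 1))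
    (hΨbij : Set.BijOn Ψ (Set.Ioo 0 1) Set.univ)
    (hΨsym : ∀ x ∈ Set.Ioo (0:ℝ) 1, Ψ (1 - x) = -Ψ x)
    (hinv1 : ∀ x ∈ Set.Ioo (0:ℝ) 1, Ψinv (Ψ x) = x)
    (hinv2 : ∀ y : ℝ, Ψinv y ∈ Set.Ioo (0:ℝ) 1 ∧ Ψ (Ψinv y) = y)
    (hΨdiff : ∀ x ∈ Set.Ioo (0:ℝ) 1, DifferentiableAt ℝ Ψ x)
    (hΨderivCont : ContinuousOn (deriv Ψ) (Set.Ioo (0:ℝ) 1))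
    (hΨderivNeg : ∀ x ∈ Set.Ioo (0:ℝ) 1, deriv Ψ x < 0)
    (a : ℝ) (ha : 0 < a) (ha2 : -2 * deriv Ψ (1/2) < a)
    (f : ℝ → ℝ) (hf0 : f 0 = 0) (hf1 : f 1 = 1)
    (hf : ∀ x ∈ Set.Ioo (0:ℝ) 1, f x = Ψinv (Ψ x + a * (x - 1/2))) :
    ∃ σ ∈ Set.Ioo (0:ℝ) (1/2),
      2 * Ψ σ = -(a * (σ - 1/2)) ∧ f σ = 1 - σ := by
  have hhalf : (1/2 : ℝ) ∈ Set.Ioo (0:ℝ) 1 := by norm_num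
  have hΨhalf : Ψ (1/2) = 0 := by
    have := hΨsym (1/2) hhalf
    norm_num at this
    linarith
  set g : ℝ → ℝ := fun x => 2 * Ψ x + a * (x - 1/2) with hg
  -- point x₀ with g x₀ > 0
  obtain ⟨hx₀mem, hx₀val⟩ := hinv2 a
  set x₀ := Ψinv a with hx₀
  have hx₀lt : x₀ < 1/2 := by
    by_contra h
    push_neg at h
    rcases eq_or_lt_of_le h with h | h
    · rw [h] at hΨhalf; rw [hΨhalf] at hx₀val; linarith
    · have := hΨanti hhalf hx₀mem h
      rw [hΨhalf, hx₀val] at this; linarith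
  have hgx₀ : 0 < g x₀ := by
    have hx₀pos : 0 < x₀ := hx₀mem.1
    simp only [hg]
    rw [hx₀val]
    nlinarith
  -- g has positive derivative at 1/2
  have hd : HasDerivAt g (2 * deriv Ψ (1/2) + a) (1/2) := by
    have h1 : HasDerivAt Ψ (deriv Ψ (1/2)) (1/2) := (hΨdiff _ hhalf).hasDerivAt
    have h2 : HasDerivAt (fun x : ℝ => a * (x - 1/2)) (a * 1) (1/2) :=
      ((hasDerivAt_id (1/2 : ℝ)).sub_const (1/2)).const_mul a
    rw [mul_one] at h2
    exact (h1.const_mul 2).add h2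
  have hg0 : g (1/2) = 0 := by
    show 2 * Ψ (1/2) + a * (1/2 - 1/2) = 0
    rw [hΨhalf]; ring
  have hcpos : 0 < 2 * deriv Ψ (1/2) + a := by linarith
  -- get x₁ ∈ (x₀, 1/2) with g x₁ < 0
  have hslope := hasDerivAt_iff_tendsto_slope.1 hd
  have hslope' : Filter.Tendsto (slope g (1/2)) (nhdsWithin (1/2) (Set.Iio (1/2)))
      (nhds (2 * deriv Ψ (1/2) + a)) :=
    hslope.mono_left (nhdsWithin_mono _ (fun x hx => Set.mem_compl_singleton_iff.2 (ne_of_lt hx)))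
  have hev : ∀ᶠ x in nhdsWithin (1/2) (Set.Iio (1/2)), 0 < slope g (1/2) x :=
    hslope'.eventually (eventually_gt_nhds hcpos)
  have hIoo : Set.Ioo x₀ (1/2 : ℝ) ∈ nhdsWithin (1/2 : ℝ) (Set.Iio (1/2)) :=
    Ioo_mem_nhdsLT_of_mem (by constructor <;> [exact hx₀lt; rfl] : (1/2:ℝ) ∈ Set.Ioc x₀ (1/2))
  obtain ⟨x₁, hx₁slope, hx₁mem⟩ :=
    (hev.and (Filter.eventually_of_mem hIoo (fun x hx => hx))).exists
  have hx₁mem : x₁ ∈ Set.Ioo x₀ (1/2 : ℝ) := hx₁mem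
  have hgx₁ : g x₁ < 0 := by
    have hlt : x₁ - 1/2 < 0 := by linarith [hx₁mem.2]
    rw [slope_def_field, hg0, sub_zero] at hx₁slope
    by_contra h
    push_neg at h
    have := div_nonpos_of_nonneg_of_nonpos h (le_of_lt hlt)
    linarith
  -- IVT on [x₀, x₁]
  have hsub : Set.Icc x₀ x₁ ⊆ Set.Ioo (0:ℝ) 1 := fun x hx =>
    ⟨lt_of_lt_of_le hx₀mem.1 hx.1, by nlinarith [hx.2, hx₁mem.2]⟩
  have hgcont : ContinuousOn g (Set.Icc x₀ x₁) := by
    apply ContinuousOn.add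
    · exact (continuousOn_const.mul (hΨcont.mono hsub))
    · exact continuousOn_const.mul ((continuousOn_id.sub continuousOn_const))
  have hmem0 : (0:ℝ) ∈ Set.Icc (g x₁) (g x₀) := ⟨le_of_lt hgx₁, le_of_lt hgx₀⟩
  have := intermediate_value_Icc' (le_of_lt hx₁mem.1) hgcont hmem0
  obtain ⟨σ, hσmem, hσval⟩ := this
  have hσIoo : σ ∈ Set.Ioo (0:ℝ) (1/2) :=
    ⟨lt_of_lt_of_le hx₀mem.1 hσmem.1, lt_of_le_of_lt hσmem.2 hx₁mem.2⟩
  have hσ01 : σ ∈ Set.Ioo (0:ℝ) 1 := ⟨hσIoo.1, by linarith [hσIoo.2]⟩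
  have heq : 2 * Ψ σ = -(a * (σ - 1/2)) := by
    have : 2 * Ψ σ + a * (σ - 1/2) = 0 := hσval
    linarith
  refine ⟨σ, hσIoo, heq, ?_⟩
  have h1σ : (1 - σ) ∈ Set.Ioo (0:ℝ) 1 := ⟨by linarith [hσ01.2], by linarith [hσ01.1]⟩
  rw [hf σ hσ01]
  have : Ψ σ + a * (σ - 1/2) = Ψ (1 - σ) := by
    rw [hΨsym σ hσ01]; linarith
  rw [this, hinv1 _ h1σ]
end
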